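/- Permutational Kaloujnine–Krasner theorem (extension of homomorphisms): Let H ≤ E be groups, let K be a group, and let f₀ : H → K be a group homomorphism. Let E act on the right on the coset space H\E of right cosets by (Hg)·e = H(ge). Then there exists a group homomorphism f : E → K ≀≀_{H\E} E into the unrestricted permutational wreath product such that π ∘ f = id_E, where π : K ≀≀_{H\E} E → E is the canonical projection, and such that for every h ∈ H the function component of f(h) takes the value f₀(h) at the coset H ∈ H\E. -/

import Mathlib

/-- The natural right action of `E` on the set `H\E` of right cosets of a subgroup
`H ≤ E`: `(Hg)·e = H(ge)`. -/
def rightCosetAct {E : Type*} [Group E] (H : Subgroup E)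
    (x : Quotient (QuotientGroup.rightRel H)) (e : E) :
    Quotient (QuotientGroup.rightRel H) :=
  Quotient.map' (fun g => g * e)
    (fun a b hab => by
      rw [QuotientGroup.rightRel_apply] at hab ⊢
      simpa [mul_assoc] using hab) x

/-- Multiplication in the unrestricted permutational wreath product
`K ≀≀_X E = (X → K) ⋊ E`, with respect to a right action `act : X → E → X`:
`(c, e)·(c', e') = (x ↦ c x * c' (x·e), e·e')`. -/
def permWreathMul {K E X : Type*} [Group K] [Group E] (act : X → E → X)
    (a b : (X → K) × E) : (X → K) × E :=
  (fun x => a.1 x * b.1 (act x a.2), a.2 * b.2)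

/-- **Permutational Kaloujnine–Krasner theorem**: given groups `H ≤ E`, a group `K` and a
homomorphism `f₀ : H → K`, there is a homomorphism `f : E → K ≀≀_{H\E} E` into the
unrestricted permutational wreath product over the right coset space `H\E`
(with its right `E`-action) such that `π ∘ f = id_E`, and such that for every `h ∈ H`
the function component of `f h` takes the value `f₀ h` at the coset `H = H·1`. -/
theorem permutational_kaloujnine_krasner {E K : Type*} [Group E] [Group K]
    (H : Subgroup E) (f₀ : ↥H →* K) :
    ∃ f : E → (Quotient (QuotientGroup.rightRel H) → K) × E,
      (∀ e₁ e₂ : E, f (e₁ * e₂) = permWreathMul (rightCosetAct H) (f e₁) (f e₂)) ∧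
      (∀ e : E, (f e).2 = e) ∧
      (∀ h : ↥H, (f (h : E)).1 (Quotient.mk'' (1 : E)) = f₀ h) := by
  classical
  set X := Quotient (QuotientGroup.rightRel H)
  -- section
  let σ : X → E := fun x => if x = Quotient.mk'' (1 : E) then 1 else Quotient.out x
  have hσ : ∀ x : X, Quotient.mk'' (σ x) = x := by
    intro x
    by_cases hx : x = Quotient.mk'' (1 : E)
    · simp [σ, hx]
    · simp only [σ, if_neg hx]
      exact Quotient.out_eq' x
  have hact : ∀ (x : X) (e : E), rightCosetAct H x e = Quotient.mk'' (σ x * e) := by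
    intro x e
    conv_lhs => rw [← hσ x]
    rfl
  have hmem : ∀ (x : X) (e : E), σ x * e * (σ (rightCosetAct H x e))⁻¹ ∈ H := by
    intro x e
    have h1 : (Quotient.mk'' (σ (rightCosetAct H x e)) : X) = Quotient.mk'' (σ x * e) := by
      rw [hσ, hact]
    rw [Quotient.eq''] at h1
    rw [QuotientGroup.rightRel_apply] at h1
    exact h1
  refine ⟨fun e => (fun x => f₀ ⟨σ x * e * (σ (rightCosetAct H x e))⁻¹, hmem x e⟩, e),
    ?_, fun e => rfl, ?_⟩
  · intro e₁ e₂
    unfold permWreathMul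
    simp only [Prod.mk.injEq, and_true]
    funext x
    have hacts : rightCosetAct H x (e₁ * e₂)
        = rightCosetAct H (rightCosetAct H x e₁) e₂ := by
      induction x using Quotient.inductionOn'
      simp [rightCosetAct, mul_assoc]
    rw [← map_mul]
    congr 1
    ext
    simp [hacts, mul_assoc]
  · intro h
    have h1 : rightCosetAct H (Quotient.mk'' (1 : E)) (h : E) = Quotient.mk'' (1 : E) := by
      rw [hact]
      have : σ (Quotient.mk'' (1 : E)) = 1 := by simp [σ]
      rw [this, one_mul]
      rw [Quotient.eq'', QuotientGroup.rightRel_apply]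
      simpa using h.2
    have h2 : σ (Quotient.mk'' (1 : E)) = 1 := by simp [σ]
    simp only [h1, h2]
    congr 1
    ext
    simp
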